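/- Assume π > 0, rank(O)=rank(T)=m, U^T O invertible. Define the internal state b_t(x_{1:t-1}) = B_{x_{t-1}}⋯B_{x_1} b_1 / (b_∞^T B_{x_{t-1}}⋯B_{x_1} b_1) for histories with positive probability. Then b_t = (U^T O) h_t(x_{1:t-1}), where [h_t(x_{1:t-1})]_i = Pr[h_t = i | x_1,…,x_{t-1}] is the conditional hidden-state distribution. -/

import Mathlib

open Matrix

/-- Unnormalized forward recursion: `fwd F v x 0 = v`,
`fwd F v x (t+1) = F (x t) *ᵥ fwd F v x t`, so that
`fwd F v x t = F_{x_{t-1}} ⋯ F_{x_0} v`. -/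
def fwd {m n : ℕ} (F : Fin n → Matrix (Fin m) (Fin m) ℝ) (v : Fin m → ℝ)
    (x : ℕ → Fin n) : ℕ → (Fin m → ℝ)
  | 0 => v
  | t + 1 => (F (x t)).mulVec (fwd F v x t)

/-- with `π > 0`, `rank O = rank T = m`, and `Uᵀ O` invertible, the normalized
internal state `b_t = B_{x_{t-1}} ⋯ B_{x_1} b_1 / (b_∞ᵀ B_{x_{t-1}} ⋯ B_{x_1} b_1)`
satisfies `b_t = (Uᵀ O) h_t`, where `h_t` is the conditional hidden-state distribution
`h_t = A_{x_{t-1}} ⋯ A_{x_1} π / (1ₘᵀ A_{x_{t-1}} ⋯ A_{x_1} π)`, for histories of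
positive probability. -/
theorem hmm_internal_state_relation (m n : ℕ)
    (T : Matrix (Fin m) (Fin m) ℝ) (O : Matrix (Fin n) (Fin m) ℝ) (π : Fin m → ℝ)
    (hπ : ∀ i, 0 < π i) (hO : O.rank = m) (hT : T.rank = m)
    (U : Matrix (Fin n) (Fin m) ℝ) (hU : IsUnit (Uᵀ * O))
    (A B : Fin n → Matrix (Fin m) (Fin m) ℝ)
    (hA : ∀ y, A y = T * Matrix.diagonal (fun i => O y i))
    (hB : ∀ y, B y = (Uᵀ * O) * A y * (Uᵀ * O)⁻¹)
    (b1 : Fin m → ℝ) (hb1 : b1 = (Uᵀ * O).mulVec π)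
    (binf : Fin m → ℝ) (hbinf : binf = Matrix.vecMul (fun _ => (1 : ℝ)) (Uᵀ * O)⁻¹)
    (x : ℕ → Fin n)
    (hpos : ∀ t, 0 < dotProduct (fun _ => (1 : ℝ)) (fwd A π x t))
    (t : ℕ) :
    (1 / dotProduct binf (fwd B b1 x t)) • fwd B b1 x t
      = (Uᵀ * O).mulVec
          ((1 / dotProduct (fun _ => (1 : ℝ)) (fwd A π x t)) • fwd A π x t) := by
  have hinv : (Uᵀ * O)⁻¹ * (Uᵀ * O) = 1 := nonsing_inv_mul _ (isUnit_iff_isUnit_det _ |>.mp hU)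
  have key : ∀ s, fwd B b1 x s = (Uᵀ * O).mulVec (fwd A π x s) := by
    intro s
    induction s with
    | zero => simpa [fwd] using hb1
    | succ s ih =>
        show (B (x s)).mulVec (fwd B b1 x s) = (Uᵀ * O).mulVec ((A (x s)).mulVec (fwd A π x s))
        have hm : B (x s) * (Uᵀ * O) = (Uᵀ * O) * A (x s) := by
          rw [hB, mul_assoc, hinv, mul_one]
        rw [ih, Matrix.mulVec_mulVec, hm, ← Matrix.mulVec_mulVec]
  have hdot : dotProduct binf (fwd B b1 x t)
      = dotProduct (fun _ => (1 : ℝ)) (fwd A π x t) := by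
    rw [key, hbinf, dotProduct_mulVec, vecMul_vecMul, hinv, vecMul_one]
  rw [hdot, key, mulVec_smul]
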